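/- Let f : ℝ → ℝ be increasing, convex, log-convex with f(0) = 1 and superlinear at infinity (f(t)/t → ∞ as t → ∞). Then for every ε > 0 there exists μ with 0 < μ < 1 such that μ² (f(t/μ) + ε) ≥ f(t) + ε/2 for all t ≥ 0. -/

import Mathlib

theorem stmt_1 (f : ℝ → ℝ) (hf : Continuous f)
    (hmono : Monotone f) (hconv : ConvexOn ℝ Set.univ f) (hf0 : f 0 = 1)
    (hlog : ConvexOn ℝ Set.univ (fun t => Real.log (f t)))
    (hsuper : Filter.Tendsto (fun t => f t / t) Filter.atTop Filter.atTop) :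
    ∀ ε > (0:ℝ), ∃ μ : ℝ, 0 < μ ∧ μ < 1 ∧
      ∀ t ≥ (0:ℝ), μ ^ 2 * (f (t / μ) + ε) ≥ f t + ε / 2 := by
  intro ε hε
  set E : ℝ := Real.exp 2 with hEdef
  have hE0 : 0 < E := Real.exp_pos 2
  set c : ℝ := ε / (4 * (E + ε)) with hcdef
  have hEε : 0 < E + ε := by linarith
  have hc0 : 0 < c := by positivity
  have hc14 : c < 1/4 := by
    rw [hcdef, div_lt_iff₀ (by linarith)]
    linarith
  have hce : c * (E + ε) = ε / 4 := by
    rw [hcdef]; field_simp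
  set μ : ℝ := Real.sqrt (1 - c) with hμdef
  have hμsq : μ ^ 2 = 1 - c := Real.sq_sqrt (by linarith)
  have hμ0 : 0 < μ := Real.sqrt_pos.mpr (by linarith)
  have hμ1 : μ < 1 := by nlinarith [hμsq]
  refine ⟨μ, hμ0, hμ1, ?_⟩
  intro t ht
  have h1 : (1:ℝ) ≤ f t := hf0 ▸ hmono ht
  have ht' : 0 ≤ t / μ := div_nonneg ht hμ0.le
  have hY1 : (1:ℝ) ≤ f (t / μ) := hf0 ▸ hmono ht'
  have hX0 : (0:ℝ) < f t := by linarith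
  -- log-convexity step: log (f t) ≤ μ * log (f (t/μ))
  have hkey : Real.log (f t) ≤ μ * Real.log (f (t / μ)) := by
    have h := hlog.2 (Set.mem_univ (t / μ)) (Set.mem_univ (0:ℝ))
      hμ0.le (by linarith : (0:ℝ) ≤ 1 - μ) (by ring)
    simp only [smul_eq_mul, mul_zero, add_zero, hf0, Real.log_one] at h
    rw [mul_div_cancel₀ t hμ0.ne'] at h
    linarith
  -- hence f (t/μ) ≥ (f t) ^ (1/μ)
  have hXY : (f t) ^ (1/μ) ≤ f (t / μ) := by
    have h2 : (f t) ^ (1/μ) = Real.exp ((1/μ) * Real.log (f t)) := by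
      rw [Real.rpow_def_of_pos hX0]; ring_nf
    have h3 : f (t / μ) = Real.exp (Real.log (f (t / μ))) :=
      (Real.exp_log (by linarith)).symm
    rw [h2, h3]
    apply Real.exp_le_exp.mpr
    rw [div_mul_eq_mul_div, one_mul, div_le_iff₀ hμ0]
    linarith [hkey]
  have hμ34 : (3:ℝ)/4 ≤ μ ^ 2 := by rw [hμsq]; linarith
  rcases le_or_gt (f t) E with hcase | hcase
  · -- small case: f t ≤ E
    have hXX : f t ≤ (f t) ^ (1/μ) := by
      calc f t = (f t) ^ (1:ℝ) := (Real.rpow_one _).symm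
        _ ≤ (f t) ^ (1/μ) := Real.rpow_le_rpow_of_exponent_le h1
            (by rw [le_div_iff₀ hμ0]; linarith)
    have hY : f t ≤ f (t / μ) := le_trans hXX hXY
    have : μ ^ 2 * (f t + ε) ≥ f t + ε / 2 := by
      rw [hμsq]
      nlinarith [hce, hc0]
    nlinarith [hμsq, hc0, hc14]
  · -- big case: E ≤ f t
    set y : ℝ := (1 - μ) / μ with hydef
    have hy0 : 0 ≤ y := div_nonneg (by linarith) hμ0.le
    have hsplit : (f t) ^ (1/μ) = f t * (f t) ^ y := by
      have h1y : 1/μ = 1 + y := by rw [hydef]; field_simp; ring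
      rw [h1y, Real.rpow_add hX0, Real.rpow_one]
    have hEy : E ^ y ≤ (f t) ^ y := Real.rpow_le_rpow hE0.le hcase.le hy0
    have hEy2 : (1/μ)^2 ≤ E ^ y := by
      have hexp : Real.exp y ≥ 1 + y := by linarith [Real.add_one_le_exp y]
      have h1y : (0:ℝ) < 1 + y := by linarith
      have : E ^ y = Real.exp (2 * y) := by
        rw [hEdef, ← Real.exp_mul]
      rw [this, two_mul, Real.exp_add]
      have h1μ : 1 + y = 1/μ := by rw [hydef]; field_simp; ring
      rw [← h1μ]
      nlinarith [Real.exp_pos y]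
    have hmain : f t ≤ μ ^ 2 * (f t) ^ (1/μ) := by
      rw [hsplit]
      have h1 : (1/μ)^2 ≤ (f t)^y := le_trans hEy2 hEy
      have hμ2 : (0:ℝ) < μ^2 := by positivity
      have hinv : μ^2 * (1/μ)^2 = 1 := by field_simp
      have h2 : (1:ℝ) ≤ μ^2 * ((f t)^y) := by
        have h3 := mul_le_mul_of_nonneg_left h1 hμ2.le
        rw [hinv] at h3; exact h3
      calc f t = f t * 1 := (mul_one _).symm
        _ ≤ f t * (μ^2 * (f t)^y) := mul_le_mul_of_nonneg_left h2 hX0.le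
        _ = μ^2 * (f t * (f t)^y) := by ring
    have hε2 : ε / 2 ≤ μ^2 * ε := by
      have h4 := mul_le_mul_of_nonneg_right hμ34 hε.le
      linarith
    have hY := mul_le_mul_of_nonneg_left hXY (by positivity : (0:ℝ) ≤ μ^2)
    calc f t + ε/2 ≤ μ^2 * ((f t) ^ (1/μ)) + μ^2 * ε := by linarith
      _ ≤ μ^2 * f (t/μ) + μ^2 * ε := by linarith
      _ = μ^2 * (f (t/μ) + ε) := by ring
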